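/- arXiv:2603.12782 — 3 statements merged into one kernel-verified Lean document; each statement's English description precedes it below -/
import Mathlib

section
/- Let 𝒜 : ℝ^{n×n} → ℝ^{n×n} be a linear map and let X : [0,∞) → ℝ^{n×n} be differentiable and satisfy the differential equation Ẋ(t) = 𝒜(X(t)) − ⟨𝒜(X(t)), X(t)⟩ X(t) for all t ≥ 0, with ‖X(0)‖_F = 1. Then ‖X(t)‖_F = 1 for all t ≥ 0. -/
open Matrix

-- Equip square real matrices with the Frobenius norm.
attribute [local instance] Matrix.frobeniusNormedAddCommGroup Matrix.frobeniusNormedSpace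

/-- Frobenius inner product `⟨A,B⟩ = trace(AᵀB) = ∑_{i,j} A_{ij} B_{ij}`. -/
def frobInner {n : ℕ} (A B : Matrix (Fin n) (Fin n) ℝ) : ℝ :=
  ∑ i, ∑ j, A i j * B i j

lemma frobInner_sub_smul {n : ℕ} (c : ℝ) (A B C : Matrix (Fin n) (Fin n) ℝ) :
    frobInner (A - c • B) C = frobInner A C - c * frobInner B C := by
  simp only [frobInner, Matrix.sub_apply, Matrix.smul_apply, smul_eq_mul, sub_mul,
    Finset.sum_sub_distrib, Finset.mul_sum, mul_assoc]

lemma frobInner_self {n : ℕ} (A : Matrix (Fin n) (Fin n) ℝ) :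
    frobInner A A = ‖A‖ ^ 2 := by
  rw [Matrix.frobenius_norm_def]
  have hnn : (0:ℝ) ≤ ∑ i, ∑ j, ‖A i j‖ ^ (2:ℝ) := by
    positivity
  rw [← Real.rpow_natCast ((∑ i, ∑ j, ‖A i j‖ ^ (2:ℝ)) ^ (1/2 : ℝ)) 2,
    ← Real.rpow_mul hnn]
  norm_num
  have : ∀ i j, ‖A i j‖ ^ (2:ℝ) = A i j * A i j := by
    intro i j
    rw [show (2:ℝ) = ((2:ℕ):ℝ) by norm_num, Real.rpow_natCast, Real.norm_eq_abs, sq_abs, sq]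
  simp only [this, frobInner, sq]

/-- entry evaluation as a continuous linear map -/
noncomputable def entryCLM {n : ℕ} (i j : Fin n) :
    Matrix (Fin n) (Fin n) ℝ →L[ℝ] ℝ :=
  LinearMap.toContinuousLinearMap
    ((LinearMap.proj j).comp (LinearMap.proj i :
      Matrix (Fin n) (Fin n) ℝ →ₗ[ℝ] (Fin n → ℝ)))

lemma entryCLM_apply {n : ℕ} (i j : Fin n) (A : Matrix (Fin n) (Fin n) ℝ) :
    entryCLM i j A = A i j := rfl

/-- **norm preservation.** Solutions of
`Ẋ = 𝒜(X) − ⟨𝒜(X), X⟩ X` with `‖X(0)‖_F = 1` stay on the Frobenius unit sphere. -/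
theorem norm_preservation {n : ℕ}
    (𝒜 : Matrix (Fin n) (Fin n) ℝ →ₗ[ℝ] Matrix (Fin n) (Fin n) ℝ)
    (X : ℝ → Matrix (Fin n) (Fin n) ℝ)
    (hX : ∀ t ∈ Set.Ici (0 : ℝ),
      HasDerivWithinAt X (𝒜 (X t) - frobInner (𝒜 (X t)) (X t) • X t) (Set.Ici 0) t)
    (h0 : ‖X 0‖ = 1) :
    ∀ t ∈ Set.Ici (0 : ℝ), ‖X t‖ = 1 := by
  classical
  set D : ℝ → Matrix (Fin n) (Fin n) ℝ :=
    fun t => 𝒜 (X t) - frobInner (𝒜 (X t)) (X t) • X t with hD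
  -- entrywise derivatives
  have hent : ∀ (i j : Fin n), ∀ t ∈ Set.Ici (0:ℝ),
      HasDerivWithinAt (fun s => X s i j) (D t i j) (Set.Ici 0) t := by
    intro i j t ht
    have := ((entryCLM i j).hasFDerivAt).comp_hasDerivWithinAt t (hX t ht)
    exact this
  set h : ℝ → ℝ := fun t => frobInner (X t) (X t) - 1 with hh
  set c : ℝ → ℝ := fun t => 2 * frobInner (𝒜 (X t)) (X t) with hc
  have hh' : ∀ t ∈ Set.Ici (0:ℝ),
      HasDerivWithinAt h (-(c t) * h t) (Set.Ici 0) t := by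
    intro t ht
    have h1 : HasDerivWithinAt (fun s => ∑ i, ∑ j, X s i j * X s i j)
        (∑ i, ∑ j, (D t i j * X t i j + X t i j * D t i j)) (Set.Ici 0) t := by
      refine HasDerivWithinAt.fun_sum fun i _ => HasDerivWithinAt.fun_sum fun j _ => ?_
      exact (hent i j t ht).mul (hent i j t ht)
    have h2 : HasDerivWithinAt h
        (∑ i, ∑ j, (D t i j * X t i j + X t i j * D t i j)) (Set.Ici 0) t := by
      simpa [hh, frobInner] using h1.sub_const 1
    convert h2 using 1
    have e1 : (∑ i, ∑ j, (D t i j * X t i j + X t i j * D t i j))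
        = 2 * frobInner (D t) (X t) := by
      simp only [frobInner, Finset.mul_sum]
      congr 1; ext i; congr 1; ext j; ring
    rw [e1, hD, frobInner_sub_smul]
    simp only [hh, hc]
    ring
  have hXc : ContinuousOn X (Set.Ici (0:ℝ)) :=
    fun t ht => (hX t ht).continuousWithinAt
  have hhc : ContinuousOn h (Set.Ici (0:ℝ)) :=
    fun t ht => (hh' t ht).continuousWithinAt
  -- continuity of the coefficient c
  have h𝒜 : Continuous 𝒜 := LinearMap.continuous_of_finiteDimensional 𝒜
  have hPc : Continuous fun A : Matrix (Fin n) (Fin n) ℝ => frobInner (𝒜 A) A := by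
    simp only [frobInner]
    refine continuous_finset_sum _ fun i _ => continuous_finset_sum _ fun j _ => ?_
    exact (((entryCLM i j).continuous.comp h𝒜)).mul (entryCLM i j).continuous
  have hcc : ContinuousOn c (Set.Ici (0:ℝ)) := by
    simp only [hc]
    exact continuousOn_const.mul (hPc.comp_continuousOn hXc)
  -- main Gronwall argument
  have key : ∀ t ∈ Set.Ici (0:ℝ), h t = 0 := by
    intro t ht
    have hIcc : Set.Icc (0:ℝ) t ⊆ Set.Ici 0 := fun x hx => hx.1
    obtain ⟨K, hK⟩ := (isCompact_Icc (a := (0:ℝ)) (b := t)).exists_bound_of_continuousOn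
      (hcc.mono hIcc)
    have hgron := norm_le_gronwallBound_of_norm_deriv_right_le
      (f := h) (f' := fun s => -(c s) * h s) (δ := 0) (K := K) (ε := 0) (a := 0) (b := t)
      (hhc.mono hIcc)
      (fun x hx => ((hh' x hx.1).mono (Set.Ici_subset_Ici.2 hx.1)))
      (by simp [hh, frobInner_self, h0])
      (fun x hx => by
        have hKx := hK x (Set.Ico_subset_Icc_self hx)
        rw [norm_mul, norm_neg, add_zero]
        exact mul_le_mul_of_nonneg_right hKx (norm_nonneg _))
    have := hgron t ⟨ht, le_refl t⟩
    rw [gronwallBound_ε0_δ0] at this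
    have hn : ‖h t‖ ≤ 0 := this
    simpa using le_antisymm hn (norm_nonneg _)
  intro t ht
  have h1 : frobInner (X t) (X t) = 1 := by
    have := key t ht
    simp only [hh] at this
    linarith
  rw [frobInner_self] at h1
  nlinarith [norm_nonneg (X t)]
end

section
/- Let 𝒜 : ℝ^{n×n} → ℝ^{n×n} be a linear map that is self-adjoint with respect to the Frobenius inner product, i.e., ⟨𝒜(X), Y⟩ = ⟨X, 𝒜(Y)⟩ for all X, Y. Let X : [0,∞) → ℝ^{n×n} be differentiable and satisfy Ẋ(t) = 𝒜(X(t)) − ρ(X(t)) X(t) with ‖X(0)‖_F = 1, where ρ(X) = ⟨𝒜(X), X⟩. Then for every t ≥ 0, the function t ↦ ρ(X(t)) is differentiable with d/dt ρ(X(t)) = 2 ‖𝒜(X(t)) − ρ(X(t)) X(t)‖_F² ≥ 0; in particular, ρ(X(t)) is nondecreasing along the flow. -/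
open Matrix

-- Equip square real matrices with the Frobenius norm.
attribute [local instance] Matrix.frobeniusNormedAddCommGroup Matrix.frobeniusNormedSpace

namespace RayleighAux

variable {n : ℕ}

abbrev Mn (n : ℕ) := Matrix (Fin n) (Fin n) ℝ

lemma frob_comm (A B : Mn n) : frobInner A B = frobInner B A := by
  unfold frobInner; simp [mul_comm]

lemma frob_add_left (A B C : Mn n) : frobInner (A + B) C = frobInner A C + frobInner B C := by
  unfold frobInner; simp [add_mul, Finset.sum_add_distrib]

lemma frob_smul_left (c : ℝ) (A B : Mn n) : frobInner (c • A) B = c * frobInner A B := by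
  unfold frobInner; simp [Finset.mul_sum, mul_assoc, Matrix.smul_apply, smul_eq_mul]

lemma frob_sub_left (A B C : Mn n) : frobInner (A - B) C = frobInner A C - frobInner B C := by
  unfold frobInner; simp [sub_mul, Finset.sum_sub_distrib]

lemma frob_sub_right (A B C : Mn n) : frobInner A (B - C) = frobInner A B - frobInner A C := by
  rw [frob_comm, frob_sub_left, frob_comm B A, frob_comm C A]

lemma frob_smul_right (c : ℝ) (A B : Mn n) : frobInner A (c • B) = c * frobInner A B := by
  rw [frob_comm, frob_smul_left, frob_comm]

lemma norm_sq (A : Mn n) : ‖A‖ ^ 2 = frobInner A A := by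
  have hs : (0:ℝ) ≤ ∑ i, ∑ j, ‖A i j‖ ^ (2:ℝ) := by positivity
  rw [Matrix.frobenius_norm_def]
  rw [← Real.rpow_natCast ((∑ i, ∑ j, ‖A i j‖ ^ (2:ℝ)) ^ (1/2:ℝ)) 2,
    ← Real.rpow_mul hs]
  norm_num
  unfold frobInner
  congr 1; ext i; congr 1; ext j
  ring

def B2 (n : ℕ) : Mn n →ₗ[ℝ] Mn n →ₗ[ℝ] ℝ :=
  LinearMap.mk₂ ℝ frobInner frob_add_left frob_smul_left
    (fun A B C => by rw [frob_comm, frob_add_left, frob_comm B A, frob_comm C A])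
    (fun c A B => frob_smul_right c A B)

noncomputable def Bc (n : ℕ) : Mn n →L[ℝ] Mn n →L[ℝ] ℝ :=
  LinearMap.toContinuousLinearMap
    ((LinearMap.toContinuousLinearMap :
        (Mn n →ₗ[ℝ] ℝ) ≃ₗ[ℝ] (Mn n →L[ℝ] ℝ)).toLinearMap.comp (B2 n))

lemma Bc_apply (A B : Mn n) : Bc n A B = frobInner A B := rfl

lemma hasDeriv_frob {f g : ℝ → Mn n} {f' g' : Mn n} {s : Set ℝ} {t : ℝ}
    (hf : HasDerivWithinAt f f' s t) (hg : HasDerivWithinAt g g' s t) :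
    HasDerivWithinAt (fun u => frobInner (f u) (g u))
      (frobInner f' (g t) + frobInner (f t) g') s t := by
  have hc : ∀ (h : ℝ → Mn n) (h' : Mn n) (i j : Fin n), HasDerivWithinAt h h' s t →
      HasDerivWithinAt (fun u => h u i j) (h' i j) s t := by
    intro h h' i j hh
    have := (ContinuousLinearMap.hasFDerivAt (LinearMap.toContinuousLinearMap
      (Matrix.entryLinearMap ℝ ℝ i j))).comp_hasDerivWithinAt
      (f := h) (f' := h') (s := s) t hh
    exact this
  have := HasDerivWithinAt.fun_sum (u := Finset.univ) (fun i _ => HasDerivWithinAt.fun_sum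
    (u := Finset.univ) (fun j _ => (hc f f' i j hf).fun_mul (hc g g' i j hg)))
  have e : ∑ i, ∑ j, (f' i j * g t i j + f t i j * g' i j)
      = frobInner f' (g t) + frobInner (f t) g' := by
    simp [frobInner, Finset.sum_add_distrib]
  rw [← e]
  exact this

lemma hasDeriv_comp_lin (𝒜 : Mn n →ₗ[ℝ] Mn n) {f : ℝ → Mn n} {f' : Mn n} {s : Set ℝ} {t : ℝ}
    (hf : HasDerivWithinAt f f' s t) :
    HasDerivWithinAt (fun u => 𝒜 (f u)) (𝒜 f') s t := by
  have := (ContinuousLinearMap.hasFDerivAt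
    (LinearMap.toContinuousLinearMap 𝒜)).comp_hasDerivWithinAt t hf
  exact this

end RayleighAux

open RayleighAux

/-- **gradient system for the Rayleigh quotient.** If `𝒜` is
self-adjoint for the Frobenius inner product and `Ẋ = 𝒜(X) − ρ(X) X` with
`‖X(0)‖_F = 1`, where `ρ(X) = ⟨𝒜(X), X⟩`, then
`d/dt ρ(X(t)) = 2‖𝒜(X(t)) − ρ(X(t))X(t)‖_F² ≥ 0`, so `ρ(X(t))` is
nondecreasing along the flow. -/
theorem rayleigh_quotient_nondecreasing {n : ℕ}
    (𝒜 : Matrix (Fin n) (Fin n) ℝ →ₗ[ℝ] Matrix (Fin n) (Fin n) ℝ)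
    (hsym : ∀ Y Z : Matrix (Fin n) (Fin n) ℝ, frobInner (𝒜 Y) Z = frobInner Y (𝒜 Z))
    (X : ℝ → Matrix (Fin n) (Fin n) ℝ)
    (hX : ∀ t ∈ Set.Ici (0 : ℝ),
      HasDerivWithinAt X (𝒜 (X t) - frobInner (𝒜 (X t)) (X t) • X t) (Set.Ici 0) t)
    (h0 : ‖X 0‖ = 1) :
    (∀ t ∈ Set.Ici (0 : ℝ),
      HasDerivWithinAt (fun s => frobInner (𝒜 (X s)) (X s))
        (2 * ‖𝒜 (X t) - frobInner (𝒜 (X t)) (X t) • X t‖ ^ 2) (Set.Ici 0) t ∧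
      0 ≤ 2 * ‖𝒜 (X t) - frobInner (𝒜 (X t)) (X t) • X t‖ ^ 2) ∧
    (∀ s t : ℝ, 0 ≤ s → s ≤ t →
      frobInner (𝒜 (X s)) (X s) ≤ frobInner (𝒜 (X t)) (X t)) := by
  set ρ : ℝ → ℝ := fun s => frobInner (𝒜 (X s)) (X s) with hρdef
  set q : ℝ → ℝ := fun s => frobInner (X s) (X s) with hqdef
  set D : ℝ → Matrix (Fin n) (Fin n) ℝ := fun s => 𝒜 (X s) - ρ s • X s with hDdef
  have hXD : ∀ t ∈ Set.Ici (0 : ℝ), HasDerivWithinAt X (D t) (Set.Ici 0) t := hX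
  have key1 : ∀ t, frobInner (X t) (D t) = ρ t - ρ t * q t := by
    intro t
    show frobInner (X t) (𝒜 (X t) - ρ t • X t) = _
    rw [frob_sub_right, frob_smul_right, frob_comm (X t) (𝒜 (X t))]
  have key2 : ∀ t, frobInner (D t) (X t) = ρ t - ρ t * q t := by
    intro t; rw [frob_comm]; exact key1 t
  -- derivative of q
  have hq : ∀ t ∈ Set.Ici (0 : ℝ),
      HasDerivWithinAt q ((-2 * ρ t) * (q t - 1)) (Set.Ici 0) t := by
    intro t ht
    have := hasDeriv_frob (hXD t ht) (hXD t ht)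
    have heq : frobInner (D t) (X t) + frobInner (X t) (D t) = (-2 * ρ t) * (q t - 1) := by
      rw [key1, key2]; ring
    rw [heq] at this
    exact this
  -- q ≡ 1 on [0, ∞)
  have hq1 : ∀ t ∈ Set.Ici (0 : ℝ), q t = 1 := by
    intro b hb
    have hb0 : (0:ℝ) ≤ b := hb
    have contρ : ContinuousOn ρ (Set.Icc 0 b) := by
      intro x hx
      exact ((hasDeriv_frob (hasDeriv_comp_lin 𝒜 (hXD x hx.1)) (hXD x hx.1)).continuousWithinAt).mono
        (Set.Icc_subset_Ici_self)
    obtain ⟨C, hC⟩ := isCompact_Icc.exists_bound_of_continuousOn contρ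
    set N : ℝ → ℝ := fun s => q s - 1 with hNdef
    have contN : ContinuousOn N (Set.Icc 0 b) := by
      intro x hx
      exact (((hq x hx.1).sub_const 1).continuousWithinAt).mono Set.Icc_subset_Ici_self
    have hN' : ∀ x ∈ Set.Ico 0 b,
        HasDerivWithinAt N ((-2 * ρ x) * (N x)) (Set.Ici x) x := by
      intro x hx
      exact (((hq x hx.1).sub_const 1).mono (Set.Ici_subset_Ici.mpr hx.1))
    have hN0 : ‖N 0‖ ≤ 0 := by
      have : q 0 = 1 := by
        have := norm_sq (X 0)
        rw [h0] at this
        simpa [hqdef] using this.symm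
      simp [hNdef, this]
    have bound : ∀ x ∈ Set.Ico 0 b,
        ‖(-2 * ρ x) * (N x)‖ ≤ (2 * |C|) * ‖N x‖ + 0 := by
      intro x hx
      have hCx := hC x ⟨hx.1, le_of_lt hx.2⟩
      rw [norm_mul, add_zero]
      apply mul_le_mul_of_nonneg_right _ (norm_nonneg _)
      rw [norm_mul]
      simp only [Real.norm_eq_abs]
      calc |(-2:ℝ)| * |ρ x| = 2 * |ρ x| := by norm_num
        _ ≤ 2 * |C| := by
            have : |ρ x| ≤ |C| := le_trans hCx (le_abs_self C)
            linarith
    have := norm_le_gronwallBound_of_norm_deriv_right_le contN hN' hN0 bound b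
      ⟨hb0, le_refl b⟩
    rw [sub_zero, gronwallBound_ε0_δ0] at this
    have hNb : N b = 0 := by
      have := le_antisymm this (norm_nonneg _)
      simpa using this
    have : q b - 1 = 0 := hNb
    linarith
  -- derivative of ρ
  have hρ : ∀ t ∈ Set.Ici (0 : ℝ),
      HasDerivWithinAt ρ (2 * ‖D t‖ ^ 2) (Set.Ici 0) t := by
    intro t ht
    have h1 := hasDeriv_comp_lin 𝒜 (hXD t ht)
    have h2 := hasDeriv_frob h1 (hXD t ht)
    have heq : frobInner (𝒜 (D t)) (X t) + frobInner (𝒜 (X t)) (D t) = 2 * ‖D t‖ ^ 2 := by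
      rw [hsym (D t) (X t), frob_comm (D t) (𝒜 (X t)), norm_sq]
      have hD : frobInner (D t) (D t)
          = frobInner (𝒜 (X t)) (D t) - ρ t * frobInner (X t) (D t) := by
        conv_lhs => rw [show D t = 𝒜 (X t) - ρ t • X t from rfl]
        rw [frob_sub_left, frob_smul_left]
      have hzero : frobInner (X t) (D t) = 0 := by
        rw [key1 t, hq1 t ht]; ring
      rw [hD, hzero]; ring
    rw [heq] at h2
    exact h2
  constructor
  · intro t ht
    exact ⟨hρ t ht, by positivity⟩
  · intro s t hs hst
    have ht : (0:ℝ) ≤ t := le_trans hs hst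
    have mono : MonotoneOn ρ (Set.Ici 0) := by
      apply monotoneOn_of_hasDerivWithinAt_nonneg (convex_Ici 0)
        (fun x hx => (hρ x hx).continuousWithinAt)
        (f' := fun x => 2 * ‖D x‖ ^ 2)
      · intro x hx
        rw [interior_Ici] at hx ⊢
        exact (hρ x (Set.mem_Ici.mpr (le_of_lt hx))).mono (Set.Ioi_subset_Ici_self)
      · intro x hx
        positivity
    exact mono hs ht hst
end

section
/- Let 𝒜 : ℝ^{n×n} → ℝ^{n×n} be a linear map, let X : [0,∞) → ℝ^{n×n} be differentiable and satisfy Ẋ(t) = 𝒜(X(t)) − ⟨𝒜(X(t)), X(t)⟩ X(t) for all t ≥ 0, and suppose X(t) converges to some matrix V ∈ ℝ^{n×n} as t → ∞, with V ≠ 0. Then V is an eigenmatrix of 𝒜: 𝒜(V) = ⟨𝒜(V), V⟩/‖V‖_F² · V. -/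
open Matrix

-- Equip square real matrices with the Frobenius norm.
attribute [local instance] Matrix.frobeniusNormedAddCommGroup Matrix.frobeniusNormedSpace

lemma frobInner_self_eq_sq {n : ℕ} (V : Matrix (Fin n) (Fin n) ℝ) :
    frobInner V V = ‖V‖ ^ 2 := by
  have h : ‖V‖ = (∑ i, ∑ j, ‖V i j‖ ^ (2 : ℝ)) ^ (1/2 : ℝ) :=
    Matrix.frobenius_norm_def V
  have hnn : (0:ℝ) ≤ ∑ i, ∑ j, ‖V i j‖ ^ (2 : ℝ) := by
    apply Finset.sum_nonneg; intro i _
    apply Finset.sum_nonneg; intro j _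
    positivity
  rw [h, ← Real.rpow_natCast (_ ^ (1/2:ℝ)) 2, ← Real.rpow_mul hnn]
  norm_num
  unfold frobInner
  simp [sq]

lemma continuous_frobInner_comp {n : ℕ}
    (𝒜 : Matrix (Fin n) (Fin n) ℝ →ₗ[ℝ] Matrix (Fin n) (Fin n) ℝ) :
    Continuous (fun Y : Matrix (Fin n) (Fin n) ℝ =>
      𝒜 Y - frobInner (𝒜 Y) Y • Y) := by
  have h𝒜 : Continuous (𝒜 : Matrix (Fin n) (Fin n) ℝ → Matrix (Fin n) (Fin n) ℝ) :=
    𝒜.continuous_of_finiteDimensional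
  have hentry : ∀ (i j : Fin n),
      Continuous (fun Y : Matrix (Fin n) (Fin n) ℝ => Y i j) := by
    intro i j
    exact (continuous_apply j).comp (continuous_apply i)
  have hfrob : Continuous (fun Y : Matrix (Fin n) (Fin n) ℝ => frobInner (𝒜 Y) Y) := by
    unfold frobInner
    apply continuous_finset_sum; intro i _
    apply continuous_finset_sum; intro j _
    exact ((hentry i j).comp h𝒜).mul (hentry i j)
  exact h𝒜.sub (hfrob.smul continuous_id)

/-- **limits are eigenmatrices.** If a solution of
`Ẋ = 𝒜(X) − ⟨𝒜(X),X⟩ X` converges as `t → ∞` to some `V ≠ 0`, then `V` is an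
eigenmatrix of `𝒜`: `𝒜(V) = (⟨𝒜(V),V⟩ / ‖V‖_F²) V`. -/
theorem limit_is_eigenmatrix {n : ℕ}
    (𝒜 : Matrix (Fin n) (Fin n) ℝ →ₗ[ℝ] Matrix (Fin n) (Fin n) ℝ)
    (X : ℝ → Matrix (Fin n) (Fin n) ℝ)
    (hX : ∀ t ∈ Set.Ici (0 : ℝ),
      HasDerivWithinAt X (𝒜 (X t) - frobInner (𝒜 (X t)) (X t) • X t) (Set.Ici 0) t)
    (V : Matrix (Fin n) (Fin n) ℝ) (hV : V ≠ 0)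
    (hlim : Filter.Tendsto X Filter.atTop (nhds V)) :
    𝒜 V = (frobInner (𝒜 V) V / ‖V‖ ^ 2) • V := by
  set c := frobInner (𝒜 V) V with hc
  set L := 𝒜 V - c • V with hLdef
  -- The RHS of the ODE tends to L
  have hder : Filter.Tendsto (fun t => 𝒜 (X t) - frobInner (𝒜 (X t)) (X t) • X t)
      Filter.atTop (nhds L) := by
    have := (continuous_frobInner_comp 𝒜).continuousAt (x := V)
    exact (this.tendsto).comp hlim
  -- L = 0
  have hL0 : L = 0 := by
    by_contra hL
    have hLpos : 0 < ‖L‖ := norm_pos_iff.mpr hL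
    set ε : ℝ := ‖L‖ / 4 with hε
    have hεpos : 0 < ε := by positivity
    have h1 : ∀ᶠ t in Filter.atTop,
        ‖(𝒜 (X t) - frobInner (𝒜 (X t)) (X t) • X t) - L‖ ≤ ε := by
      have := hder (Metric.closedBall_mem_nhds L hεpos)
      filter_upwards [this] with t ht
      simpa [dist_eq_norm] using ht
    have h2 : ∀ᶠ t in Filter.atTop, ‖X t - V‖ ≤ ε := by
      have := hlim (Metric.closedBall_mem_nhds V hεpos)
      filter_upwards [this] with t ht
      simpa [dist_eq_norm] using ht
    obtain ⟨T₀, hT₀⟩ := ((h1.and h2).and (Filter.eventually_ge_atTop (0:ℝ))).exists_forall_of_atTop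
    set T := max T₀ 0 with hT
    have hTmem : ∀ t, T ≤ t → (‖(𝒜 (X t) - frobInner (𝒜 (X t)) (X t) • X t) - L‖ ≤ ε
        ∧ ‖X t - V‖ ≤ ε) ∧ 0 ≤ t := by
      intro t ht
      exact hT₀ t (le_trans (le_max_left _ _) ht)
    -- mean value inequality on g t = X t - t • L over [T, T+1]
    set g : ℝ → Matrix (Fin n) (Fin n) ℝ := fun t => X t - t • L with hg
    have hsub : Set.Icc T (T+1) ⊆ Set.Ici (0:ℝ) := by
      intro t ht
      exact le_trans (le_max_right _ _) ht.1
    have hgderiv : ∀ t ∈ Set.Icc T (T+1),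
        HasDerivWithinAt g ((𝒜 (X t) - frobInner (𝒜 (X t)) (X t) • X t) - L)
          (Set.Icc T (T+1)) t := by
      intro t ht
      have h1' := ((hX t (hsub ht)).mono hsub)
      have h2' : HasDerivWithinAt (fun s : ℝ => s • L) L (Set.Icc T (T+1)) t := by
        have h := ((hasDerivAt_id t).smul_const L).hasDerivWithinAt (s := Set.Icc T (T+1))
        rw [one_smul] at h
        exact h
      exact h1'.sub h2'
    have hbound : ∀ t ∈ Set.Icc T (T+1),
        ‖(𝒜 (X t) - frobInner (𝒜 (X t)) (X t) • X t) - L‖ ≤ ε := by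
      intro t ht
      exact ((hTmem t ht.1).1).1
    have hmvt := Convex.norm_image_sub_le_of_norm_hasDerivWithin_le hgderiv hbound
      (convex_Icc T (T+1)) (Set.left_mem_Icc.2 (by linarith)) (Set.right_mem_Icc.2 (by linarith))
    have hgdiff : g (T+1) - g T = X (T+1) - X T - L := by
      simp only [hg]
      module
    rw [hgdiff] at hmvt
    have hnorm1 : ‖(T+1) - T‖ = 1 := by norm_num
    rw [hnorm1, mul_one] at hmvt
    have hXT : ‖X T - V‖ ≤ ε := ((hTmem T le_rfl).1).2
    have hXT1 : ‖X (T+1) - V‖ ≤ ε := ((hTmem (T+1) (by linarith)).1).2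
    have : ‖L‖ ≤ 3 * ε := by
      have h3 : ‖L‖ ≤ ‖X (T+1) - X T‖ + ‖X (T+1) - X T - L‖ := by
        have heq : L = (X (T+1) - X T) - (X (T+1) - X T - L) := by module
        calc ‖L‖ = ‖(X (T+1) - X T) - (X (T+1) - X T - L)‖ := by rw [← heq]
        _ ≤ _ := norm_sub_le _ _
      have h4 : ‖X (T+1) - X T‖ ≤ 2 * ε := by
        have := norm_sub_le (X (T+1) - V) (X T - V)
        have heq : (X (T+1) - V) - (X T - V) = X (T+1) - X T := by module
        rw [heq] at this
        linarith
      linarith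
    rw [hε] at this
    linarith
  -- From L = 0 : 𝒜 V = c • V
  have hAV : 𝒜 V = c • V := by
    have := sub_eq_zero.mp hL0
    exact this
  -- c = c * ‖V‖²
  have hVnorm : frobInner V V = ‖V‖ ^ 2 := frobInner_self_eq_sq V
  have hcc : c = c * ‖V‖ ^ 2 := by
    have : frobInner (c • V) V = c * frobInner V V := by
      unfold frobInner
      rw [Finset.mul_sum]
      apply Finset.sum_congr rfl; intro i _
      rw [Finset.mul_sum]
      apply Finset.sum_congr rfl; intro j _
      simp [Matrix.smul_apply, smul_eq_mul]
      ring
    calc c = frobInner (𝒜 V) V := hc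
    _ = frobInner (c • V) V := by rw [hAV]
    _ = c * frobInner V V := this
    _ = c * ‖V‖ ^ 2 := by rw [hVnorm]
  have hVne : ‖V‖ ^ 2 ≠ 0 := by
    have := norm_pos_iff.mpr hV
    positivity
  rw [hAV]
  congr 1
  field_simp
  linarith [hcc]
end
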